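/- Let k be a positive integer with gcd(k, 6) = 1. The set of T-cycles contained in D_k (i.e., of orbits {x, T(x), …, T^{n−1}(x)} of points x ∈ D_k with T^n(x) = x) is finite if and only if the set V(k) of primitive 0–1 vectors v (of any length) such that x(v) has denominator k in lowest terms is finite (Proposition 3.1, claim 1). -/

import Mathlib

/-- The `3x+1` function on rationals: `T x = x/2` if the numerator of `x` is even,
and `T x = (3x+1)/2` if the numerator of `x` is odd. -/
noncomputable def T (x : ℚ) : ℚ := if Even x.num then x / 2 else (3 * x + 1) / 2

/-- `ρ(v) = ∑_{j=0}^{n-1} v_j ⬝ 3^{v_{j+1} + ⋯ + v_{n-1}} ⬝ 2^j`, for a `0-1` vector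
encoded as a list. -/
def rhoL : List ℕ → ℕ
  | [] => 0
  | a :: t => a * 3 ^ t.sum + 2 * rhoL t

/-- `x(v) = ρ(v) / (2^n - 3^{ω(v)})`, where `n` is the length of `v` and
`ω(v)` is the sum of its entries. -/
noncomputable def xL (l : List ℕ) : ℚ :=
  (rhoL l : ℚ) / ((2 : ℚ) ^ l.length - (3 : ℚ) ^ l.sum)

/-- parity bit of a rational -/
def pb (x : ℚ) : ℕ := if Even x.num then 0 else 1

/-- parity vector of the first `n` iterates -/
noncomputable def pvec (x : ℚ) (n : ℕ) : List ℕ := (List.range n).map (fun j => pb (T^[j] x))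

lemma pvec_length (x : ℚ) (n : ℕ) : (pvec x n).length = n := by simp [pvec]

lemma pvec_getElem (x : ℚ) (n j : ℕ) (h : j < (pvec x n).length) :
    (pvec x n)[j] = pb (T^[j] x) := by simp [pvec]

lemma pvec_succ (x : ℚ) (n : ℕ) : pvec x (n + 1) = pb x :: pvec (T x) n := by
  simp [pvec, List.range_succ_eq_map, List.map_map, Function.comp_def,
    Function.iterate_succ_apply]

lemma two_T (y : ℚ) : 2 * T y = 3 ^ pb y * y + (pb y : ℚ) := by
  unfold T pb
  split <;> push_cast <;> ring

lemma rhoL_append (t : List ℕ) (a : ℕ) :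
    rhoL (t ++ [a]) = 3 ^ a * rhoL t + a * 2 ^ t.length := by
  induction t with
  | nil => simp [rhoL]
  | cons b u ih =>
    have hs : (u ++ [a]).sum = u.sum + a := by simp
    simp only [List.cons_append, rhoL, List.append_eq, ih, hs, List.length_cons]
    ring

lemma D_ne (n σ : ℕ) (hn : 1 ≤ n) : (2:ℚ)^n - (3:ℚ)^σ ≠ 0 := by
  rw [sub_ne_zero]
  intro h
  have h2 : ((2^n : ℕ) : ℚ) = ((3^σ : ℕ) : ℚ) := by push_cast; exact h
  have h3 : (2:ℕ)^n = 3^σ := Nat.cast_injective h2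
  have he : Even ((2:ℕ)^n) := (Nat.even_pow).mpr ⟨even_two, by omega⟩
  rw [h3] at he
  have ho : Odd ((3:ℕ)^σ) := (Nat.odd_iff.mpr rfl).pow
  exact (Nat.not_even_iff_odd.mpr ho) he

lemma D_odd (n σ : ℕ) (hn : 1 ≤ n) : Odd ((2:ℤ)^n - (3:ℤ)^σ) := by
  have h2 : Even ((2:ℤ)^n) := by
    obtain ⟨m, rfl⟩ : ∃ m, n = m + 1 := ⟨n - 1, by omega⟩
    exact ⟨2^m * 2^0 * 1, by ring⟩
  have h3 : Odd ((3:ℤ)^σ) := (Int.odd_iff.mpr rfl).pow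
  rcases h2 with ⟨a, ha⟩
  rcases h3 with ⟨b, hb⟩
  exact ⟨a - b - 1, by rw [ha, hb]; ring⟩

lemma xL_eq (l : List ℕ) :
    xL l = (rhoL l : ℚ) / ((2 : ℚ) ^ l.length - (3 : ℚ) ^ l.sum) := rfl

lemma even_num_xL (l : List ℕ) (h1 : 1 ≤ l.length) :
    (Even (xL l).num ↔ Even (rhoL l)) := by
  set x := xL l with hx
  set D : ℤ := 2 ^ l.length - 3 ^ l.sum with hD
  have hDodd : Odd D := D_odd _ _ h1
  have hDQ : ((D : ℚ)) = (2 : ℚ) ^ l.length - (3 : ℚ) ^ l.sum := by push_cast [hD]; ring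
  have hD0 : (D : ℚ) ≠ 0 := by rw [hDQ]; exact D_ne _ _ h1
  have hcross : (x.num : ℚ) * D = (rhoL l : ℚ) * (x.den : ℚ) := by
    have hxv : x = (rhoL l : ℚ) / (D : ℚ) := by rw [hx, xL_eq, hDQ]
    have hden : (x.den : ℚ) ≠ 0 := by exact_mod_cast x.den_ne_zero
    have := Rat.num_div_den x
    field_simp [hxv] at this ⊢
    have hxD : x * (D : ℚ) = (rhoL l : ℚ) := by rw [hxv, div_mul_cancel₀ _ hD0]
    linear_combination (x.den : ℚ) * hxD + (D : ℚ) * this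
  have hZ : x.num * D = (rhoL l : ℤ) * (x.den : ℤ) := by exact_mod_cast hcross
  have hdenodd : ¬ Even (x.den : ℤ) := by
    have hdvd : (x.den : ℤ) ∣ D := by
      have h1 : (x.den : ℤ) ∣ x.num * D := ⟨rhoL l * 1, by rw [hZ]; ring⟩
      have hcop : IsCoprime (x.den : ℤ) x.num := by
        rw [Int.isCoprime_iff_gcd_eq_one, Int.gcd]
        simpa [Nat.coprime_comm] using x.reduced
      exact hcop.dvd_of_dvd_mul_left h1
    intro he
    have hED : Even D := (dvd_trans he.two_dvd hdvd).elim fun c hc => ⟨c, by omega⟩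
    exact (Int.not_odd_iff_even.mpr hED) hDodd
  have hDne : ¬ Even D := Int.not_even_iff_odd.mpr hDodd
  constructor
  · intro h
    have : Even (x.num * D) := h.mul_right _
    rw [hZ, Int.even_mul] at this
    rcases this with h' | h'
    · exact_mod_cast h'
    · exact absurd h' hdenodd
  · intro h
    have : Even ((rhoL l : ℤ) * x.den) := (Int.even_coe_nat _ |>.mpr h).mul_right _
    rw [← hZ, Int.even_mul] at this
    rcases this with h' | h'
    · exact h'
    · exact absurd h' hDne

lemma pb_xL (a : ℕ) (t : List ℕ) (ha : a = 0 ∨ a = 1) : pb (xL (a :: t)) = a := by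
  have hev : Even (xL (a :: t)).num ↔ Even (rhoL (a :: t)) :=
    even_num_xL (a :: t) (by simp)
  have hrho : rhoL (a :: t) = a * 3 ^ t.sum + 2 * rhoL t := rfl
  have h3 : Odd ((3:ℕ) ^ t.sum) := (Nat.odd_iff.mpr rfl).pow
  rcases ha with rfl | rfl
  · have : Even (rhoL (0 :: t)) := by rw [hrho]; exact ⟨rhoL t, by ring⟩
    simp [pb, hev.mpr this]
  · have : ¬ Even (rhoL (1 :: t)) := by
      rw [hrho, Nat.not_even_iff_odd]
      rcases h3 with ⟨c, hc⟩
      exact ⟨c + rhoL t, by omega⟩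
    unfold pb
    rw [if_neg (fun h => this (hev.mp h))]

lemma T_xL (l : List ℕ) (h01 : ∀ a ∈ l, a = 0 ∨ a = 1) (hne : l ≠ []) :
    T (xL l) = xL (l.rotate 1) := by
  obtain ⟨a, t, rfl⟩ : ∃ a t, l = a :: t := by
    cases l with
    | nil => exact absurd rfl hne
    | cons a t => exact ⟨a, t, rfl⟩
  have ha : a = 0 ∨ a = 1 := h01 a (by simp)
  have hrot : (a :: t).rotate 1 = t ++ [a] := by
    simpa using List.rotate_cons_succ t a 0
  have hpb := pb_xL a t ha
  rcases ha with rfl | rfl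
  · have hev : Even (xL (0 :: t)).num := by
      by_contra h; simp [pb, h] at hpb
    rw [show T (xL (0 :: t)) = xL (0 :: t) / 2 from by unfold T; rw [if_pos hev], hrot]
    rw [xL_eq, xL_eq]
    have h1 : (0 :: t).length = t.length + 1 := rfl
    have h2 : ((0 :: t) : List ℕ).sum = t.sum := by simp
    have h3 : (t ++ [0]).length = t.length + 1 := by simp
    have h4 : (t ++ [0]).sum = t.sum := by simp
    have h5 : (rhoL (0 :: t) : ℚ) = 2 * rhoL t := by push_cast [rhoL]; ring
    have h6 : (rhoL (t ++ [0]) : ℚ) = rhoL t := by push_cast [rhoL_append]; ring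
    rw [h1, h2, h3, h4, h5, h6]
    have hD : (2:ℚ) ^ (t.length + 1) - 3 ^ t.sum ≠ 0 := D_ne _ _ (by omega)
    field_simp
  · have hev : ¬ Even (xL (1 :: t)).num := by
      intro h; simp [pb, h] at hpb
    rw [show T (xL (1 :: t)) = (3 * xL (1 :: t) + 1) / 2 from by unfold T; rw [if_neg hev],
      hrot]
    rw [xL_eq, xL_eq]
    have h1 : (1 :: t).length = t.length + 1 := rfl
    have h2 : ((1 :: t) : List ℕ).sum = 1 + t.sum := by simp
    have h3 : (t ++ [1]).length = t.length + 1 := by simp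
    have h4 : (t ++ [1]).sum = t.sum + 1 := by simp
    have h5 : (rhoL (1 :: t) : ℚ) = 3 ^ t.sum + 2 * rhoL t := by push_cast [rhoL]; ring
    have h6 : (rhoL (t ++ [1]) : ℚ) = 3 * rhoL t + 2 ^ t.length := by
      push_cast [rhoL_append]; ring
    rw [h1, h2, h3, h4, h5, h6]
    have hD : (2:ℚ) ^ (t.length + 1) - 3 ^ (1 + t.sum) ≠ 0 := D_ne _ _ (by omega)
    have hD' : (2:ℚ) ^ (t.length + 1) - 3 ^ (t.sum + 1) ≠ 0 := D_ne _ _ (by omega)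
    field_simp
    ring

lemma iter_T_xL (l : List ℕ) (h01 : ∀ a ∈ l, a = 0 ∨ a = 1) (hne : l ≠ []) (m : ℕ) :
    T^[m] (xL l) = xL (l.rotate m) := by
  induction m with
  | zero => simp
  | succ m ih =>
    rw [Function.iterate_succ_apply', ih,
      T_xL (l.rotate m) (fun a ha => h01 a ((List.mem_rotate).mp ha))
        (by simp [← List.length_pos_iff_ne_nil] at hne ⊢; omega),
      List.rotate_rotate]

lemma xL_periodic (l : List ℕ) (h01 : ∀ a ∈ l, a = 0 ∨ a = 1) (hne : l ≠ []) :
    T^[l.length] (xL l) = xL l := by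
  rw [iter_T_xL l h01 hne, List.rotate_length]

lemma cycle_eq (n : ℕ) (y : ℚ) :
    2 ^ n * T^[n] y = 3 ^ (pvec y n).sum * y + (rhoL (pvec y n) : ℚ) := by
  induction n generalizing y with
  | zero => simp [pvec, rhoL]
  | succ n ih =>
    rw [pvec_succ, Function.iterate_succ_apply]
    have h1 : (rhoL (pb y :: pvec (T y) n) : ℚ)
        = (pb y : ℚ) * 3 ^ (pvec (T y) n).sum + 2 * rhoL (pvec (T y) n) := by
      push_cast [rhoL]; ring
    have h2 : ((pb y :: pvec (T y) n).sum : ℕ) = pb y + (pvec (T y) n).sum := by simp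
    rw [h1, h2]
    have h3 := ih (T y)
    have h4 := two_T y
    calc (2:ℚ) ^ (n+1) * T^[n] (T y) = 2 ^ n * (2 ^ 1 * T^[n] (T y)) := by ring
    _ = 2 * (3 ^ (pvec (T y) n).sum * T y + (rhoL (pvec (T y) n) : ℚ)) := by
        rw [← h3]; ring
    _ = 3 ^ (pvec (T y) n).sum * (2 * T y) + 2 * (rhoL (pvec (T y) n) : ℚ) := by ring
    _ = _ := by rw [h4]; ring

lemma eq_xL_of_periodic (y : ℚ) (n : ℕ) (hn : 1 ≤ n) (hy : T^[n] y = y) :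
    y = xL (pvec y n) := by
  have h := cycle_eq n y
  rw [hy] at h
  have hD : (2:ℚ) ^ n - 3 ^ (pvec y n).sum ≠ 0 := D_ne _ _ hn
  rw [xL_eq, pvec_length]
  rw [eq_div_iff hD]
  linarith [h]

lemma pvec_entries (y : ℚ) (n : ℕ) : ∀ a ∈ pvec y n, a = 0 ∨ a = 1 := by
  intro a ha
  simp only [pvec, List.mem_map] at ha
  obtain ⟨j, _, rfl⟩ := ha
  unfold pb
  split <;> simp

lemma pvec_xL (l : List ℕ) (h01 : ∀ a ∈ l, a = 0 ∨ a = 1) (hne : l ≠ []) :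
    pvec (xL l) l.length = l := by
  apply List.ext_getElem (by simp [pvec_length])
  intro j h1 h2
  rw [pvec_getElem _ _ _ h1, iter_T_xL l h01 hne j]
  obtain ⟨b, u, hbu⟩ : ∃ b u, l.rotate j = b :: u := by
    cases hrot : l.rotate j with
    | nil => rw [← List.length_pos_iff_ne_nil] at hne; simp [← List.length_rotate l j, hrot] at hne
    | cons b u => exact ⟨b, u, rfl⟩
  have hb : b = l[j] := by
    have h := List.getElem_rotate l j 0 (by simp [hbu])
    simp [hbu, Nat.mod_eq_of_lt h2] at h
    exact h
  rw [hbu, pb_xL b u (by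
    have : b ∈ l.rotate j := by simp [hbu]
    exact h01 b ((List.mem_rotate).mp this)), hb]

lemma pvec_rotate (x : ℚ) (d m : ℕ) (hd : T^[d] x = x) :
    (pvec x d).rotate m = pvec (T^[m] x) d := by
  apply List.ext_getElem (by simp [pvec_length])
  intro j h1 h2
  have hjd : j < d := by simpa [pvec_length] using h2
  have hd0 : 0 < d := by omega
  have hmod : (j + m) % (pvec x d).length < (pvec x d).length := by
    rw [pvec_length]; exact Nat.mod_lt _ hd0
  rw [List.getElem_rotate, pvec_getElem x d _ hmod,
    pvec_getElem (T^[m] x) d j (by simpa [pvec_length] using h2)]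
  have hper : Function.IsPeriodicPt T d x := hd
  have h3 : T^[(j + m) % (pvec x d).length] x = T^[j + m] x := by
    rw [pvec_length]
    exact hper.iterate_mod_apply (j + m)
  rw [h3, ← Function.iterate_add_apply]

/-- A vector is primitive if its cyclic rotations are pairwise distinct, i.e. no
nontrivial rotation fixes it. -/
def Primitive (l : List ℕ) : Prop := ∀ m, 1 ≤ m → m < l.length → l.rotate m ≠ l

/-- The set of `T`-cycles contained in `D_k`. -/
def cyclesIn (k : ℕ) : Set (Set ℚ) :=
  {c | ∃ x : ℚ, ∃ n : ℕ, 1 ≤ n ∧ x.den = k ∧ T^[n] x = x ∧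
    c = {y | ∃ j : ℕ, T^[j] x = y}}

/-- `V(k)`: the set of primitive `0-1` vectors `v` (of any length `≥ 1`) such that
`x(v)` has denominator `k` in lowest terms. -/
def Vset (k : ℕ) : Set (List ℕ) :=
  {l | 1 ≤ l.length ∧ (∀ a ∈ l, a = 0 ∨ a = 1) ∧ Primitive l ∧ (xL l).den = k}

/-- every periodic point is `xL` of a primitive vector -/
lemma exists_primitive (x : ℚ) (n : ℕ) (hn : 1 ≤ n) (hx : T^[n] x = x) :
    ∃ w : List ℕ, 1 ≤ w.length ∧ (∀ a ∈ w, a = 0 ∨ a = 1) ∧ Primitive w ∧ xL w = x := by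
  have hper : Function.IsPeriodicPt T n x := hx
  set d := Function.minimalPeriod T x with hdd
  have hd0 : 0 < d := hper.minimalPeriod_pos (by omega)
  have hpd : Function.IsPeriodicPt T d x := Function.isPeriodicPt_minimalPeriod T x
  refine ⟨pvec x d, by simp [pvec_length]; omega, pvec_entries x d, ?_,
    (eq_xL_of_periodic x d hd0 hpd).symm⟩
  intro m hm1 hm2 heq
  rw [pvec_length] at hm2
  rw [pvec_rotate x d m hpd] at heq
  have hy : Function.IsPeriodicPt T d (T^[m] x) := hpd.apply_iterate m
  have h1 : T^[m] x = xL (pvec (T^[m] x) d) := eq_xL_of_periodic _ d hd0 hy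
  have h2 : x = xL (pvec x d) := eq_xL_of_periodic x d hd0 hpd
  have h3 : T^[m] x = x := by rw [h1, heq, ← h2]
  have : d ≤ m := Function.IsPeriodicPt.minimalPeriod_le (by omega) h3
  omega

/-- minimal period of `xL v` equals the length of `v` for primitive `v` -/
lemma minPeriod_xL (v : List ℕ) (h01 : ∀ a ∈ v, a = 0 ∨ a = 1) (h1 : 1 ≤ v.length)
    (hp : Primitive v) : Function.minimalPeriod T (xL v) = v.length := by
  have hne : v ≠ [] := by intro h; simp [h] at h1
  have hper : Function.IsPeriodicPt T v.length (xL v) := xL_periodic v h01 hne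
  set d := Function.minimalPeriod T (xL v) with hdd
  have hd0 : 0 < d := hper.minimalPeriod_pos (by omega)
  have hdle : d ≤ v.length := hper.minimalPeriod_le (by omega)
  rcases eq_or_lt_of_le hdle with h | h
  · exact h
  · exfalso
    have hpd : Function.IsPeriodicPt T d (xL v) := Function.isPeriodicPt_minimalPeriod T _
    have hv : v = pvec (xL v) v.length := (pvec_xL v h01 hne).symm
    have hrot : v.rotate d = v := by
      rw [hv, pvec_rotate (xL v) v.length d hper, hpd, ← hv]
    exact hp d (by omega) h hrot

lemma xL_inj_prim (v w : List ℕ) (hv01 : ∀ a ∈ v, a = 0 ∨ a = 1) (hv1 : 1 ≤ v.length)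
    (hvp : Primitive v) (hw01 : ∀ a ∈ w, a = 0 ∨ a = 1) (hw1 : 1 ≤ w.length)
    (hwp : Primitive w) (h : xL v = xL w) : v = w := by
  have hlen : v.length = w.length := by
    rw [← minPeriod_xL v hv01 hv1 hvp, ← minPeriod_xL w hw01 hw1 hwp, h]
  have hvne : v ≠ [] := by intro hh; simp [hh] at hv1
  have hwne : w ≠ [] := by intro hh; simp [hh] at hw1
  calc v = pvec (xL v) v.length := (pvec_xL v hv01 hvne).symm
  _ = pvec (xL w) w.length := by rw [h, hlen]
  _ = w := pvec_xL w hw01 hwne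

/-- Proposition 3.1, claim 1: the set of `T`-cycles contained in `D_k` is finite
iff `V(k)` is finite. -/
theorem stmt_8 (k : ℕ) (hk : 0 < k) (h6 : Nat.gcd k 6 = 1) :
    (cyclesIn k).Finite ↔ (Vset k).Finite := by
  constructor
  · intro hfin
    have hcover : Vset k ⊆
        ⋃ c ∈ cyclesIn k, {v | v ∈ Vset k ∧ {y : ℚ | ∃ j, T^[j] (xL v) = y} = c} := by
      intro v hv
      refine Set.mem_biUnion ?_ ⟨hv, rfl⟩
      obtain ⟨h1, h01, hp, hden⟩ := hv
      exact ⟨xL v, v.length, h1, hden,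
        xL_periodic v h01 (by intro h; simp [h] at h1), rfl⟩
    apply Set.Finite.subset (Set.Finite.biUnion hfin ?_) hcover
    intro c hc
    obtain ⟨x, n, hn, hden, hx, rfl⟩ := hc
    have hcfin : Set.Finite {y : ℚ | ∃ j, T^[j] x = y} := by
      apply Set.Finite.subset ((Set.finite_Iio n).image (fun j => T^[j] x))
      rintro y ⟨j, rfl⟩
      refine ⟨j % n, Nat.mod_lt _ (by omega), ?_⟩
      exact (show Function.IsPeriodicPt T n x from hx).iterate_mod_apply j
    apply Set.Finite.of_finite_image (f := xL) ?_ ?_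
    · apply hcfin.subset
      rintro y ⟨v, ⟨⟨h1, h01, hp, hden'⟩, hc⟩, rfl⟩
      rw [← hc]
      exact ⟨0, rfl⟩
    · rintro v ⟨⟨h1, h01, hp, _⟩, _⟩ w ⟨⟨h1', h01', hp', _⟩, _⟩ h
      exact xL_inj_prim v w h01 h1 hp h01' h1' hp' h
  · intro hfin
    have hsub : cyclesIn k ⊆ (fun v => {y : ℚ | ∃ j, T^[j] (xL v) = y}) '' (Vset k) := by
      rintro c ⟨x, n, hn, hden, hx, rfl⟩
      obtain ⟨w, hw1, hw01, hwp, hwx⟩ := exists_primitive x n hn hx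
      exact ⟨w, ⟨hw1, hw01, hwp, by rw [hwx]; exact hden⟩, by simp only []; rw [hwx]⟩
    exact (hfin.image _).subset hsub
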